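/- arXiv:1803.09155 — 2 statements merged into one kernel-verified Lean document; each statement's English description precedes it below -/
import Mathlib

section
/- As N → ∞, the sum of Euler's totient function up to N satisfies ∑_{n=1}^{N} φ(n) = (1 + o(1)) · (3/π²) · N²; equivalently, the limit of (∑_{n=1}^{N} φ(n)) / N² as N → ∞ equals 3/π². -/
open Filter Finset Real

open ArithmeticFunction ArithmeticFunction.Moebius Topology in
private lemma mu_complex_tsum :
    ∑' n : ℕ, ((μ n : ℝ) / (n : ℝ) ^ 2 : ℂ) = ((6 / Real.pi ^ 2 : ℝ) : ℂ) := by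
  have h2 : (1 : ℝ) < (2 : ℂ).re := by norm_num
  have hmul := LSeries_zeta_mul_Lseries_moebius h2
  rw [LSeries_zeta_eq_riemannZeta h2, riemannZeta_two] at hmul
  have hL : LSeries (fun n => ((μ n : ℤ) : ℂ)) 2 = 6 / (Real.pi : ℂ) ^ 2 := by
    have hne : (Real.pi : ℂ) ^ 2 ≠ 0 := by
      simp [Real.pi_ne_zero, Complex.ofReal_ne_zero]
    field_simp at hmul ⊢
    linear_combination hmul
  rw [show ((6 / Real.pi ^ 2 : ℝ) : ℂ) = 6 / (Real.pi : ℂ) ^ 2 by push_cast; ring, ← hL]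
  rw [LSeries]
  congr 1
  ext n
  rcases eq_or_ne n 0 with rfl | hn
  · simp [LSeries.term]
  · rw [LSeries.term_of_ne_zero hn]
    rw [show (2 : ℂ) = ((2 : ℕ) : ℂ) by norm_num, Complex.cpow_natCast]
    push_cast
    ring

open ArithmeticFunction ArithmeticFunction.Moebius Topology in
private lemma mu_real_tsum :
    ∑' n : ℕ, (μ n : ℝ) / (n : ℝ) ^ 2 = 6 / Real.pi ^ 2 := by
  have h := mu_complex_tsum
  have he : (fun n : ℕ => ((μ n : ℝ) / (n : ℝ) ^ 2 : ℂ))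
      = fun n : ℕ => ((((μ n : ℝ) / (n : ℝ) ^ 2 : ℝ)) : ℂ) := by
    funext n; push_cast; ring
  rw [he, ← Complex.ofReal_tsum] at h
  exact_mod_cast h

open ArithmeticFunction ArithmeticFunction.Moebius Topology in
private lemma gauss_real (m : ℕ) : ∑ q ∈ Finset.Icc 1 m, (q : ℝ) = m * (m + 1) / 2 := by
  induction m with
  | zero => simp
  | succ m ih =>
    rw [Finset.sum_Icc_succ_top (by omega), ih]
    push_cast
    ring

open ArithmeticFunction ArithmeticFunction.Moebius Topology in
private lemma totient_inv (n : ℕ) (hn : 0 < n) :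
    (Nat.totient n : ℝ) = ∑ p ∈ n.divisorsAntidiagonal, (μ p.1 : ℝ) * (p.2 : ℝ) := by
  have H := (ArithmeticFunction.sum_eq_iff_sum_smul_moebius_eq
      (R := ℝ) (f := fun n => (Nat.totient n : ℝ)) (g := fun n => (n : ℝ))).mp
    (fun n _ => by exact_mod_cast congrArg (Nat.cast : ℕ → ℝ) (Nat.sum_totient n))
  rw [← H n hn]
  refine Finset.sum_congr rfl fun p _ => ?_
  rw [zsmul_eq_mul]

open ArithmeticFunction ArithmeticFunction.Moebius Topology in
private lemma totient_sum_eq (N : ℕ) :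
    ∑ n ∈ Finset.Icc 1 N, (Nat.totient n : ℝ)
      = ∑ d ∈ Finset.Icc 1 N, (μ d : ℝ) * ((N / d : ℕ) * ((N / d : ℕ) + 1) / 2) := by
  have h1 : ∑ n ∈ Finset.Icc 1 N, (Nat.totient n : ℝ)
      = ∑ n ∈ Finset.Icc 1 N, ∑ p ∈ n.divisorsAntidiagonal, (μ p.1 : ℝ) * (p.2 : ℝ) :=
    Finset.sum_congr rfl fun n hn => totient_inv n (by simp at hn; omega)
  have h2 : ∀ d ∈ Finset.Icc 1 N, (μ d : ℝ) * ((N / d : ℕ) * ((N / d : ℕ) + 1) / 2)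
      = ∑ q ∈ Finset.Icc 1 (N / d), (μ d : ℝ) * (q : ℝ) := by
    intro d _
    rw [← Finset.mul_sum, gauss_real]
  rw [h1, Finset.sum_congr rfl h2]
  rw [Finset.sum_sigma', Finset.sum_sigma']
  refine Finset.sum_nbij' (i := fun x => ⟨x.2.1, x.2.2⟩) (j := fun x => ⟨x.1 * x.2, (x.1, x.2)⟩)
    ?_ ?_ ?_ ?_ ?_
  · rintro ⟨n, p⟩ h
    simp only [Finset.mem_sigma, Finset.mem_Icc, Nat.mem_divisorsAntidiagonal] at h ⊢
    obtain ⟨⟨h1n, h2n⟩, hp, -⟩ := h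
    have hpos : 0 < p.1 * p.2 := by omega
    have hp1 : 0 < p.1 := Nat.pos_of_ne_zero fun h => by simp [h] at hpos
    have hp2 : 0 < p.2 := Nat.pos_of_ne_zero fun h => by simp [h] at hpos
    have hle : p.1 ≤ p.1 * p.2 := Nat.le_mul_of_pos_right _ hp2
    refine ⟨⟨hp1, by omega⟩, hp2, ?_⟩
    rw [Nat.le_div_iff_mul_le hp1, mul_comm]
    omega
  · rintro ⟨d, q⟩ h
    simp only [Finset.mem_sigma, Finset.mem_Icc, Nat.mem_divisorsAntidiagonal] at h ⊢
    obtain ⟨⟨hd1, hdN⟩, hq1, hqN⟩ := h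
    rw [Nat.le_div_iff_mul_le (by omega)] at hqN
    have : 0 < d * q := Nat.mul_pos (by omega) (by omega)
    exact ⟨⟨by omega, by rw [mul_comm]; omega⟩, trivial, by omega⟩
  · rintro ⟨n, p⟩ h
    simp only [Finset.mem_sigma, Nat.mem_divisorsAntidiagonal] at h
    simp [h.2.1]
  · rintro ⟨d, q⟩ h
    rfl
  · rintro ⟨n, p⟩ h
    rfl

open ArithmeticFunction ArithmeticFunction.Moebius in
private noncomputable def hfun (N d : ℕ) : ℝ :=
  if 1 ≤ d ∧ d ≤ N then (μ d : ℝ) * ((N / d : ℕ) * ((N / d : ℕ) + 1) / 2) / (N : ℝ) ^ 2 else 0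

open ArithmeticFunction ArithmeticFunction.Moebius Topology in
private lemma floor_div_tendsto (d : ℕ) (hd : 0 < d) :
    Tendsto (fun N : ℕ => ((N / d : ℕ) : ℝ) / N) atTop (𝓝 (1 / d)) := by
  have hd0 : (0 : ℝ) < d := by exact_mod_cast hd
  have hlow : Tendsto (fun N : ℕ => 1 / (d : ℝ) - 1 / N) atTop (𝓝 (1 / d)) := by
    simpa using tendsto_const_nhds.sub (tendsto_one_div_atTop_nhds_zero_nat (𝕜 := ℝ))
  refine tendsto_of_tendsto_of_tendsto_of_le_of_le' hlow tendsto_const_nhds ?_ ?_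
  · filter_upwards [eventually_ge_atTop 1] with N hN
    have hN0 : (0 : ℝ) < N := by positivity
    have h1 : (N : ℝ) < ((N / d : ℕ) : ℝ) * d + d := by
      exact_mod_cast Nat.lt_div_mul_add hd
    have key : (N : ℝ) / d - 1 ≤ ((N / d : ℕ) : ℝ) := by
      rw [div_sub_one hd0.ne', div_le_iff₀ hd0]
      nlinarith
    calc 1 / (d : ℝ) - 1 / N = ((N : ℝ) / d - 1) / N := by field_simp
      _ ≤ ((N / d : ℕ) : ℝ) / N := by gcongr
  · filter_upwards [eventually_ge_atTop 1] with N hN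
    have hN0 : (0 : ℝ) < N := by positivity
    have h2 : ((N / d : ℕ) : ℝ) ≤ (N : ℝ) / d := Nat.cast_div_le
    calc ((N / d : ℕ) : ℝ) / N ≤ ((N : ℝ) / d) / N := by gcongr
      _ = 1 / d := by field_simp

open ArithmeticFunction ArithmeticFunction.Moebius Topology in
private lemma hfun_tendsto (d : ℕ) :
    Tendsto (fun N : ℕ => hfun N d) atTop (𝓝 ((μ d : ℝ) / (d : ℝ) ^ 2 / 2)) := by
  rcases Nat.eq_zero_or_pos d with rfl | hd
  · simpa [hfun] using tendsto_const_nhds (α := ℝ) (f := atTop (α := ℕ))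
  have hd0 : (0 : ℝ) < d := by exact_mod_cast hd
  have key := floor_div_tendsto d hd
  have key2 : Tendsto (fun N : ℕ => (((N / d : ℕ) : ℝ) + 1) / N) atTop (𝓝 (1 / d)) := by
    simp only [add_div]
    simpa using key.add tendsto_one_div_atTop_nhds_zero_nat
  have T := ((key.const_mul ((μ d : ℝ) / 2)).mul key2)
  have hval : (μ d : ℝ) / 2 * (1 / d) * (1 / d) = (μ d : ℝ) / (d : ℝ) ^ 2 / 2 := by
    ring
  rw [hval] at T
  refine T.congr' ?_
  filter_upwards [eventually_ge_atTop d, eventually_ge_atTop 1] with N hNd hN1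
  have hN0 : (0 : ℝ) < N := by positivity
  rw [hfun, if_pos ⟨hd, hNd⟩]
  field_simp

open ArithmeticFunction ArithmeticFunction.Moebius Topology in
private lemma hfun_bound (N d : ℕ) : ‖hfun N d‖ ≤ 1 / (d : ℝ) ^ 2 := by
  rw [hfun]
  split_ifs with h
  · obtain ⟨hd1, hdN⟩ := h
    have hd0 : (1 : ℝ) ≤ d := by exact_mod_cast hd1
    have hN0 : (0 : ℝ) < N := by
      have : 1 ≤ N := le_trans hd1 hdN
      positivity
    have hm1 : (1 : ℝ) ≤ ((N / d : ℕ) : ℝ) := by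
      exact_mod_cast (Nat.one_le_div_iff (by omega)).mpr hdN
    have hmd : ((N / d : ℕ) : ℝ) * d ≤ N := by
      exact_mod_cast Nat.div_mul_le_self N d
    have hμ : |(μ d : ℝ)| ≤ 1 := by
      exact_mod_cast (by exact_mod_cast @ArithmeticFunction.abs_moebius_le_one d : |(μ d : ℤ)| ≤ 1)
    have hX : (0 : ℝ) ≤ ((N / d : ℕ) : ℝ) * (((N / d : ℕ) : ℝ) + 1) / 2 := by positivity
    rw [Real.norm_eq_abs, abs_div, abs_mul, abs_of_nonneg hX,
      abs_of_nonneg (by positivity : (0 : ℝ) ≤ (N : ℝ) ^ 2)]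
    calc |(μ d : ℝ)| * (((N / d : ℕ) : ℝ) * (((N / d : ℕ) : ℝ) + 1) / 2) / (N : ℝ) ^ 2
        ≤ 1 * (((N / d : ℕ) : ℝ) * (((N / d : ℕ) : ℝ) + 1) / 2) / (N : ℝ) ^ 2 := by gcongr
      _ = ((N / d : ℕ) : ℝ) * (((N / d : ℕ) : ℝ) + 1) / 2 / (N : ℝ) ^ 2 := by ring
      _ ≤ 1 / (d : ℝ) ^ 2 := by
          rw [div_le_div_iff₀ (by positivity) (by positivity)]
          nlinarith [mul_le_mul hmd hmd (by positivity) hN0.le]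
  · simp only [norm_zero]
    positivity

/-- As `N → ∞`, `∑_{n=1}^{N} φ(n) = (1 + o(1)) · (3/π²) · N²`; equivalently
`(∑_{n=1}^{N} φ(n)) / N² → 3/π²`. -/
theorem totient_sum_asymptotic :
    Tendsto (fun N : ℕ => (∑ n ∈ Finset.Icc 1 N, (Nat.totient n : ℝ)) / (N : ℝ) ^ 2)
      atTop (nhds (3 / Real.pi ^ 2)) := by
  have hbound : Summable (fun d : ℕ => 1 / (d : ℝ) ^ 2) :=
    Real.summable_one_div_nat_pow.mpr one_lt_two
  have key := tendsto_tsum_of_dominated_convergence (f := hfun)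
    (g := fun d : ℕ => (ArithmeticFunction.moebius d : ℝ) / (d : ℝ) ^ 2 / 2)
    hbound hfun_tendsto (Eventually.of_forall fun N d => hfun_bound N d)
  have hsum : ∑' d : ℕ, (ArithmeticFunction.moebius d : ℝ) / (d : ℝ) ^ 2 / 2
      = 3 / Real.pi ^ 2 := by
    rw [tsum_div_const, mu_real_tsum]
    rw [div_div, mul_comm, ← div_div]
    norm_num
  rw [hsum] at key
  refine key.congr fun N => ?_
  rw [tsum_eq_sum (s := Finset.Icc 1 N) (fun d hd => by
    rw [hfun, if_neg]
    simpa [Finset.mem_Icc] using hd)]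
  rw [totient_sum_eq, Finset.sum_div]
  exact Finset.sum_congr rfl fun d hd => by
    rw [hfun, if_pos (by simpa [Finset.mem_Icc] using hd)]
end

section
/- There exists a constant C > 0 such that for all natural numbers N ≥ 3, the correlation sum ∑_{n=1}^{N-1} Υ(n) · Υ(N − n) is at most C · N · (log N) · (log log N). -/
open scoped Classical
open Finset Real

/-- The master function `Υ`: `Υ(n) = log p` if `n = p²` for a prime `p` (note then
`p = √n`), `Υ(n) = log(p₁p₂)` if `n = p₁p₂` for distinct primes `p₁, p₂`, and
`Υ(n) = 0` otherwise. -/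
noncomputable def Upsilon (n : ℕ) : ℝ :=
  if ∃ p : ℕ, p.Prime ∧ n = p ^ 2 then Real.log (Nat.sqrt n)
  else if ∃ p₁ p₂ : ℕ, p₁.Prime ∧ p₂.Prime ∧ p₁ ≠ p₂ ∧ n = p₁ * p₂ then Real.log n
  else 0

private lemma theta_le (n : ℕ) :
    ∑ p ∈ (range (n+1)).filter Nat.Prime, Real.log p ≤ n * Real.log 4 := by
  have h1 : ∑ p ∈ (range (n+1)).filter Nat.Prime, Real.log p
      = Real.log (primorial n) := by
    rw [primorial, Nat.cast_prod, Real.log_prod]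
    intro p hp
    have := (Finset.mem_filter.mp hp).2.pos
    positivity
  rw [h1]
  calc Real.log (primorial n) ≤ Real.log ((4:ℝ)^n) := by
        apply Real.log_le_log (by exact_mod_cast primorial_pos n)
        exact_mod_cast primorial_le_4_pow n
    _ = n * Real.log 4 := Real.log_pow 4 n

/-- dyadic bound -/
private lemma dyadic_bound (k : ℕ) :
    ∑ p ∈ (Ioc (2^k) (2^(k+1))).filter Nat.Prime, (1 / p : ℝ) ≤ 8 / (k+1) := by
  rcases Nat.eq_zero_or_pos k with rfl | hk
  · have : (Ioc (2^0) (2^1)).filter Nat.Prime = {2} := by decide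
    rw [this]
    norm_num
  -- k ≥ 1
  have hlog2 : (0:ℝ) < Real.log 2 := Real.log_pos (by norm_num)
  have key : ∀ p ∈ (Ioc (2^k) (2^(k+1))).filter Nat.Prime,
      (1 / p : ℝ) ≤ Real.log p / (2^k * (k * Real.log 2)) := by
    intro p hp
    obtain ⟨hmem, hprime⟩ := Finset.mem_filter.mp hp
    obtain ⟨hlt, hle⟩ := Finset.mem_Ioc.mp hmem
    have hp2 : ((2:ℝ)^k) < p := by exact_mod_cast hlt
    have hppos : (0:ℝ) < p := lt_trans (by positivity) hp2
    have hlogp : (k:ℝ) * Real.log 2 ≤ Real.log p := by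
      calc (k:ℝ) * Real.log 2 = Real.log ((2:ℝ)^k) := (Real.log_pow 2 k).symm
        _ ≤ Real.log p := Real.log_le_log (by positivity) hp2.le
    have hkpos : (0:ℝ) < (k:ℝ) * Real.log 2 := by
      have : (1:ℝ) ≤ k := by exact_mod_cast hk
      nlinarith
    rw [div_le_div_iff₀ hppos (by positivity)]
    calc (1:ℝ) * (2^k * (k * Real.log 2)) = 2^k * (k * Real.log 2) := by ring
      _ ≤ p * Real.log p := by
          have := mul_le_mul hp2.le hlogp hkpos.le hppos.le
          linarith [this, mul_comm (p:ℝ) (Real.log p)]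
      _ = Real.log p * p := mul_comm _ _
  calc ∑ p ∈ (Ioc (2^k) (2^(k+1))).filter Nat.Prime, (1 / p : ℝ)
      ≤ ∑ p ∈ (Ioc (2^k) (2^(k+1))).filter Nat.Prime,
          Real.log p / (2^k * (k * Real.log 2)) := Finset.sum_le_sum key
    _ = (∑ p ∈ (Ioc (2^k) (2^(k+1))).filter Nat.Prime, Real.log p)
          / (2^k * (k * Real.log 2)) := by rw [Finset.sum_div]
    _ ≤ ((2^(k+1) : ℕ) * Real.log 4) / (2^k * (k * Real.log 2)) := by
        have hkpos : (0:ℝ) < (k:ℝ) * Real.log 2 := by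
          have : (1:ℝ) ≤ k := by exact_mod_cast hk
          nlinarith
        apply div_le_div_of_nonneg_right ?_ (by positivity) |>.trans_eq rfl
        refine le_trans ?_ (theta_le (2^(k+1)))
        apply Finset.sum_le_sum_of_subset_of_nonneg
        · intro p hp
          obtain ⟨hmem, hprime⟩ := Finset.mem_filter.mp hp
          exact Finset.mem_filter.mpr ⟨Finset.mem_range.mpr
            (Nat.lt_succ_of_le (Finset.mem_Ioc.mp hmem).2), hprime⟩
        · intro p hp _
          exact Real.log_nonneg (by exact_mod_cast (Finset.mem_filter.mp hp).2.one_lt.le)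
    _ = 4 / k := by
        have hk' : (0:ℝ) < k := by exact_mod_cast hk
        have hlog4 : Real.log 4 = 2 * Real.log 2 := by
          rw [show (4:ℝ) = 2^2 by norm_num, Real.log_pow]; push_cast; ring
        rw [hlog4]
        push_cast
        field_simp
        ring
    _ ≤ 8 / (k+1) := by
        have hk' : (1:ℝ) ≤ k := by exact_mod_cast hk
        rw [div_le_div_iff₀ (by linarith) (by linarith)]
        nlinarith

private lemma sum_inv_primes_pow (K : ℕ) :
    ∑ p ∈ (range (2^K+1)).filter Nat.Prime, (1/p:ℝ) ≤ 1 + 8 * (harmonic K : ℝ) := by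
  induction K with
  | zero =>
      have h : (range (2^0+1)).filter Nat.Prime = ∅ := by decide
      rw [h, Finset.sum_empty]
      simp
  | succ K ih =>
      have hpow : 2^(K+1) = 2^K * 2 := pow_succ 2 K
      have hsplit : range (2^(K+1)+1) = range (2^K+1) ∪ Ioc (2^K) (2^(K+1)) := by
        ext x
        simp only [Finset.mem_union, Finset.mem_range, Finset.mem_Ioc]
        omega
      have hdisj : Disjoint ((range (2^K+1)).filter Nat.Prime)
          ((Ioc (2^K) (2^(K+1))).filter Nat.Prime) := by
        apply Finset.disjoint_filter_filter
        rw [Finset.disjoint_left]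
        intro x hx hx2
        rw [Finset.mem_range] at hx
        rw [Finset.mem_Ioc] at hx2
        omega
      rw [hsplit, Finset.filter_union, Finset.sum_union hdisj]
      have h2 : (harmonic (K+1) : ℝ) = (harmonic K : ℝ) + 1/(K+1) := by
        rw [harmonic_succ]
        push_cast
        ring
      calc ∑ p ∈ (range (2^K+1)).filter Nat.Prime, (1/p:ℝ)
            + ∑ p ∈ (Ioc (2^K) (2^(K+1))).filter Nat.Prime, (1/p:ℝ)
          ≤ (1 + 8 * (harmonic K : ℝ)) + 8/(K+1) := add_le_add ih (dyadic_bound K)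
        _ = 1 + 8 * (harmonic (K+1) : ℝ) := by rw [h2]; ring

private lemma log_three_ge : (1.039:ℝ) ≤ Real.log 3 := by
  have h2 : (0.6931471803:ℝ) < Real.log 2 := Real.log_two_gt_d9
  have h89 : Real.log 8 ≤ Real.log 9 := Real.log_le_log (by norm_num) (by norm_num)
  have h8 : Real.log 8 = 3 * Real.log 2 := by
    rw [show (8:ℝ) = 2^3 by norm_num, Real.log_pow]; push_cast; ring
  have h9 : Real.log 9 = 2 * Real.log 3 := by
    rw [show (9:ℝ) = 3^2 by norm_num, Real.log_pow]; push_cast; ring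
  nlinarith

private lemma loglog_ge {x : ℕ} (hx : 3 ≤ x) : (1/30 : ℝ) ≤ Real.log (Real.log x) := by
  have h3 : (1.039:ℝ) ≤ Real.log x := by
    refine le_trans log_three_ge (Real.log_le_log (by norm_num) ?_)
    exact_mod_cast hx
  have hy : (0:ℝ) < Real.log x := by linarith
  have h1 := Real.log_le_sub_one_of_pos (show (0:ℝ) < (Real.log x)⁻¹ by positivity)
  rw [Real.log_inv] at h1
  have hinv : (Real.log x)⁻¹ ≤ (1.039:ℝ)⁻¹ := inv_anti₀ (by norm_num) h3
  have : (1.039:ℝ)⁻¹ ≤ 1 - 1/30 := by norm_num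
  linarith

private lemma mertens_bound (x : ℕ) (hx : 3 ≤ x) :
    ∑ p ∈ (range (x+1)).filter Nat.Prime, (1/p:ℝ) ≤ 800 * Real.log (Real.log x) := by
  set K := Nat.log 2 x + 1 with hK
  have hxK : x < 2^K := Nat.lt_pow_succ_log_self (by norm_num) x
  have h3 : (1.039:ℝ) ≤ Real.log x := by
    refine le_trans log_three_ge (Real.log_le_log (by norm_num) ?_)
    exact_mod_cast hx
  have hstep1 : ∑ p ∈ (range (x+1)).filter Nat.Prime, (1/p:ℝ)
      ≤ ∑ p ∈ (range (2^K+1)).filter Nat.Prime, (1/p:ℝ) := by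
    apply Finset.sum_le_sum_of_subset_of_nonneg
    · apply Finset.filter_subset_filter
      apply Finset.range_subset_range.mpr
      omega
    · intro p hp _
      have := (Finset.mem_filter.mp hp).2.pos
      positivity
  have hstep2 := sum_inv_primes_pow K
  have hstep3 : (harmonic K : ℝ) ≤ 1 + Real.log K := harmonic_le_one_add_log K
  -- bound K ≤ 3 log x
  have hKle : (K:ℝ) ≤ 3 * Real.log x := by
    have hpow : (2:ℕ)^(Nat.log 2 x) ≤ x := Nat.pow_log_le_self 2 (by omega)
    have hlogpow : (Nat.log 2 x : ℝ) * Real.log 2 ≤ Real.log x := by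
      calc (Nat.log 2 x : ℝ) * Real.log 2 = Real.log ((2:ℝ)^(Nat.log 2 x)) :=
            (Real.log_pow 2 _).symm
        _ ≤ Real.log x := by
            have hc : ((2:ℝ))^(Nat.log 2 x) ≤ (x:ℝ) := by exact_mod_cast hpow
            exact Real.log_le_log (by positivity) hc
    have h2 : (0.6931471803:ℝ) < Real.log 2 := Real.log_two_gt_d9
    have : (Nat.log 2 x : ℝ) ≤ 2 * Real.log x := by nlinarith [show (0:ℝ) ≤ (Nat.log 2 x : ℝ) from Nat.cast_nonneg _]
    have hKcast : (K:ℝ) = (Nat.log 2 x : ℝ) + 1 := by rw [hK]; push_cast; ring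
    rw [hKcast]
    linarith
  have hlogK : Real.log K ≤ Real.log 3 + Real.log (Real.log x) := by
    calc Real.log K ≤ Real.log (3 * Real.log x) := by
          apply Real.log_le_log (by positivity) hKle
      _ = Real.log 3 + Real.log (Real.log x) := Real.log_mul (by norm_num) (by linarith)
  have hlog3 : Real.log 3 ≤ 1.39 := by
    have h2 : Real.log 2 < 0.6931471808 := Real.log_two_lt_d9
    have h34 : Real.log 3 ≤ Real.log 4 := Real.log_le_log (by norm_num) (by norm_num)
    have h4 : Real.log 4 = 2 * Real.log 2 := by
      rw [show (4:ℝ) = 2^2 by norm_num, Real.log_pow]; push_cast; ring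
    nlinarith
  have hll := loglog_ge hx
  have hKpos : (0:ℝ) < K := by positivity
  linarith

private lemma upsilon_nonneg (n : ℕ) : 0 ≤ Upsilon n := by
  unfold Upsilon
  split_ifs with h1 h2
  · obtain ⟨p, hp, rfl⟩ := h1
    rw [Nat.sqrt_eq']
    exact Real.log_nonneg (by exact_mod_cast hp.one_lt.le)
  · obtain ⟨p, q, hp, hq, hne, rfl⟩ := h2
    exact Real.log_nonneg (by exact_mod_cast Nat.mul_pos hp.pos hq.pos)
  · exact le_refl _

private lemma upsilon_le_log {n N : ℕ} (hN : 1 ≤ N) (hnN : n ≤ N) :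
    Upsilon n ≤ Real.log N := by
  unfold Upsilon
  split_ifs with h1 h2
  · obtain ⟨p, hp, rfl⟩ := h1
    rw [Nat.sqrt_eq']
    apply Real.log_le_log (by exact_mod_cast hp.pos)
    have : p ≤ p^2 := Nat.le_self_pow (by norm_num) p
    exact_mod_cast le_trans this hnN
  · obtain ⟨p, q, hp, hq, hne, rfl⟩ := h2
    apply Real.log_le_log (by exact_mod_cast Nat.mul_pos hp.pos hq.pos)
    exact_mod_cast hnN
  · exact Real.log_nonneg (by exact_mod_cast hN)

private lemma upsilon_le_W {N n : ℕ} (hn : n ≤ N) :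
    Upsilon n ≤ ∑ pq ∈ ((range (N+1)).filter Nat.Prime) ×ˢ ((range (N+1)).filter Nat.Prime),
      (if n = pq.1 * pq.2 then Real.log pq.2 else 0) := by
  have hnonneg : ∀ pq ∈ ((range (N+1)).filter Nat.Prime) ×ˢ ((range (N+1)).filter Nat.Prime),
      0 ≤ (if n = pq.1 * pq.2 then Real.log pq.2 else 0 : ℝ) := by
    intro pq hpq
    have hq := (Finset.mem_filter.mp (Finset.mem_product.mp hpq).2).2
    split_ifs
    · exact Real.log_nonneg (by exact_mod_cast hq.one_lt.le)
    · exact le_refl _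
  unfold Upsilon
  split_ifs with h1 h2
  · obtain ⟨p, hp, rfl⟩ := h1
    rw [Nat.sqrt_eq']
    have hpN : p ∈ (range (N+1)).filter Nat.Prime := by
      refine Finset.mem_filter.mpr ⟨Finset.mem_range.mpr ?_, hp⟩
      have : p ≤ p^2 := Nat.le_self_pow (by norm_num) p
      omega
    have hsub : ({(p,p)} : Finset (ℕ × ℕ)) ⊆
        ((range (N+1)).filter Nat.Prime) ×ˢ ((range (N+1)).filter Nat.Prime) := by
      intro x hx
      rw [Finset.mem_singleton] at hx
      subst hx
      exact Finset.mem_product.mpr ⟨hpN, hpN⟩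
    refine le_trans ?_ (Finset.sum_le_sum_of_subset_of_nonneg hsub
      (fun pq hpq _ => hnonneg pq hpq))
    rw [Finset.sum_singleton, if_pos (by ring)]
  · obtain ⟨p, q, hp, hq, hne, rfl⟩ := h2
    have hpN : p ∈ (range (N+1)).filter Nat.Prime := by
      refine Finset.mem_filter.mpr ⟨Finset.mem_range.mpr ?_, hp⟩
      have : p ≤ p * q := Nat.le_mul_of_pos_right p hq.pos
      omega
    have hqN : q ∈ (range (N+1)).filter Nat.Prime := by
      refine Finset.mem_filter.mpr ⟨Finset.mem_range.mpr ?_, hq⟩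
      have : q ≤ p * q := Nat.le_mul_of_pos_left q hp.pos
      omega
    have hsub : ({(p,q), (q,p)} : Finset (ℕ × ℕ)) ⊆
        ((range (N+1)).filter Nat.Prime) ×ˢ ((range (N+1)).filter Nat.Prime) := by
      intro x hx
      rw [Finset.mem_insert, Finset.mem_singleton] at hx
      rcases hx with rfl | rfl
      · exact Finset.mem_product.mpr ⟨hpN, hqN⟩
      · exact Finset.mem_product.mpr ⟨hqN, hpN⟩
    refine le_trans ?_ (Finset.sum_le_sum_of_subset_of_nonneg hsub
      (fun pq hpq _ => hnonneg pq hpq))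
    have hpairne : ((p,q) : ℕ × ℕ) ≠ (q,p) := by
      intro h
      exact hne (by simpa using congrArg Prod.fst h)
    rw [Finset.sum_pair hpairne, if_pos rfl, if_pos (mul_comm p q)]
    have h1 : ((p * q : ℕ) : ℝ) = (p:ℝ) * (q:ℝ) := by push_cast; ring
    rw [h1, Real.log_mul (by exact_mod_cast hp.pos.ne') (by exact_mod_cast hq.pos.ne')]
    ring_nf
    exact le_refl _
  · exact Finset.sum_nonneg hnonneg

private lemma sum_upsilon_le {N : ℕ} (hN : 3 ≤ N) :
    ∑ n ∈ Icc 1 (N-1), Upsilon n ≤ 1600 * N * Real.log (Real.log N) := by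
  set P := (range (N+1)).filter Nat.Prime with hP
  have step1 : ∑ n ∈ Icc 1 (N-1), Upsilon n
      ≤ ∑ n ∈ Icc 1 (N-1), ∑ pq ∈ P ×ˢ P, (if n = pq.1 * pq.2 then Real.log pq.2 else 0) := by
    apply Finset.sum_le_sum
    intro n hn
    have := (Finset.mem_Icc.mp hn).2
    exact upsilon_le_W (by omega)
  have step2 : ∑ n ∈ Icc 1 (N-1), ∑ pq ∈ P ×ˢ P,
        (if n = pq.1 * pq.2 then Real.log pq.2 else 0)
      = ∑ pq ∈ P ×ˢ P, (if pq.1 * pq.2 ∈ Icc 1 (N-1) then Real.log pq.2 else 0) := by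
    rw [Finset.sum_comm]
    apply Finset.sum_congr rfl
    intro pq _
    exact Finset.sum_ite_eq' (Icc 1 (N-1)) (pq.1 * pq.2) (fun _ => Real.log pq.2)
  have step3 : ∑ pq ∈ P ×ˢ P, (if pq.1 * pq.2 ∈ Icc 1 (N-1) then Real.log pq.2 else 0)
      = ∑ p ∈ P, ∑ q ∈ P, (if p * q ∈ Icc 1 (N-1) then Real.log q else 0) := by
    rw [Finset.sum_product]
  have inner : ∀ p ∈ P, ∑ q ∈ P, (if p * q ∈ Icc 1 (N-1) then Real.log q else 0)
      ≤ ((N:ℝ)/p) * Real.log 4 := by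
    intro p hp
    have hpp := (Finset.mem_filter.mp hp).2
    have h1 : ∑ q ∈ P, (if p * q ∈ Icc 1 (N-1) then Real.log q else 0)
        = ∑ q ∈ P.filter (fun q => p * q ∈ Icc 1 (N-1)), Real.log q :=
      (Finset.sum_filter _ _).symm
    rw [h1]
    have h2 : P.filter (fun q => p * q ∈ Icc 1 (N-1)) ⊆
        (range (N/p+1)).filter Nat.Prime := by
      intro q hq
      obtain ⟨hqP, hpq⟩ := Finset.mem_filter.mp hq
      have hqprime := (Finset.mem_filter.mp hqP).2
      have hle := (Finset.mem_Icc.mp hpq).2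
      have hqNp : q ≤ N / p := by
        rw [Nat.le_div_iff_mul_le hpp.pos]
        have : q * p = p * q := mul_comm q p
        omega
      exact Finset.mem_filter.mpr ⟨Finset.mem_range.mpr (by omega), hqprime⟩
    calc ∑ q ∈ P.filter (fun q => p * q ∈ Icc 1 (N-1)), Real.log q
        ≤ ∑ q ∈ (range (N/p+1)).filter Nat.Prime, Real.log q := by
          apply Finset.sum_le_sum_of_subset_of_nonneg h2
          intro q hq _
          exact Real.log_nonneg (by exact_mod_cast (Finset.mem_filter.mp hq).2.one_lt.le)
      _ ≤ (N/p : ℕ) * Real.log 4 := theta_le (N/p)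
      _ ≤ ((N:ℝ)/p) * Real.log 4 := by
          apply mul_le_mul_of_nonneg_right (Nat.cast_div_le)
          exact Real.log_nonneg (by norm_num)
  have step4 : ∑ p ∈ P, ∑ q ∈ P, (if p * q ∈ Icc 1 (N-1) then Real.log q else 0)
      ≤ ∑ p ∈ P, ((N:ℝ)/p) * Real.log 4 := Finset.sum_le_sum inner
  have step5 : ∑ p ∈ P, ((N:ℝ)/p) * Real.log 4
      = (N * Real.log 4) * ∑ p ∈ P, (1/p:ℝ) := by
    rw [Finset.mul_sum]
    apply Finset.sum_congr rfl
    intro p _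
    ring
  have hmert := mertens_bound N hN
  have hlog4 : Real.log 4 ≤ 2 := by
    have h2 : Real.log 2 < 0.6931471808 := Real.log_two_lt_d9
    have h4 : Real.log 4 = 2 * Real.log 2 := by
      rw [show (4:ℝ) = 2^2 by norm_num, Real.log_pow]; push_cast; ring
    nlinarith
  have hlog4nn : (0:ℝ) ≤ Real.log 4 := Real.log_nonneg (by norm_num)
  have hNnn : (0:ℝ) ≤ (N:ℝ) := Nat.cast_nonneg N
  have hllnn : (0:ℝ) ≤ Real.log (Real.log N) := le_trans (by norm_num) (loglog_ge hN)
  calc ∑ n ∈ Icc 1 (N-1), Upsilon n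
      ≤ (N * Real.log 4) * ∑ p ∈ P, (1/p:ℝ) := by
        rw [← step5]
        exact le_trans step1 (le_of_eq step2 |>.trans (le_of_eq step3) |>.trans step4)
    _ ≤ (N * Real.log 4) * (800 * Real.log (Real.log N)) := by
        apply mul_le_mul_of_nonneg_left hmert (by positivity)
    _ ≤ 1600 * N * Real.log (Real.log N) := by nlinarith [mul_nonneg hNnn hllnn]

/-- There is a constant `C > 0` such that for every `N ≥ 3`,
`∑_{n=1}^{N-1} Υ(n) · Υ(N − n) ≤ C · N · log N · log log N`. -/
theorem upsilon_correlation_upper_bound :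
    ∃ C : ℝ, 0 < C ∧ ∀ N : ℕ, 3 ≤ N →
      ∑ n ∈ Finset.Icc 1 (N - 1), Upsilon n * Upsilon (N - n) ≤
        C * N * Real.log N * Real.log (Real.log N) := by
  refine ⟨1600, by norm_num, ?_⟩
  intro N hN
  have hlogN : (0:ℝ) ≤ Real.log N :=
    Real.log_nonneg (by exact_mod_cast le_trans (by norm_num) hN)
  have step1 : ∑ n ∈ Icc 1 (N-1), Upsilon n * Upsilon (N - n)
      ≤ ∑ n ∈ Icc 1 (N-1), Upsilon n * Real.log N := by
    apply Finset.sum_le_sum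
    intro n hn
    apply mul_le_mul_of_nonneg_left ?_ (upsilon_nonneg n)
    exact upsilon_le_log (by omega) (by omega)
  have step2 : ∑ n ∈ Icc 1 (N-1), Upsilon n * Real.log N
      = (∑ n ∈ Icc 1 (N-1), Upsilon n) * Real.log N := by
    rw [Finset.sum_mul]
  have step3 := sum_upsilon_le hN
  have hllnn : (0:ℝ) ≤ Real.log (Real.log N) := le_trans (by norm_num) (loglog_ge hN)
  calc ∑ n ∈ Icc 1 (N-1), Upsilon n * Upsilon (N - n)
      ≤ (∑ n ∈ Icc 1 (N-1), Upsilon n) * Real.log N := by rw [← step2]; exact step1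
    _ ≤ (1600 * N * Real.log (Real.log N)) * Real.log N :=
        mul_le_mul_of_nonneg_right step3 hlogN
    _ = 1600 * N * Real.log N * Real.log (Real.log N) := by ring
end
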